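/- In the setting of a finite probability space with filtration (F_t), a finitely-valued random variable G with P(G=c) > 0 and P(G=c | F_t) > 0 a.s. for all c and t ≤ T−1, define for fixed t the measure Q_t on G_t = F_t ∨ σ(G) by Q_t(A) = E[(1/q_t^G) 1_A], where q_t^G(ω) = P(G = G(ω)|F_t)(ω)/P(G = G(ω)). Then Q_t is a probability measure under which F_t and σ(G) are independent; moreover Q_t coincides with P on F_t and on σ(G), i.e. Q_t(B ∩ {G = c}) = P(B) · P(G = c) for all B ∈ F_t and c ∈ Γ. -/

import Mathlib

open MeasureTheory Set

private lemma integrable_fin {Ω : Type*} [Fintype Ω] {m : MeasurableSpace Ω} {μ : Measure Ω}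
    [IsFiniteMeasure μ] {f : Ω → ℝ} (hf : AEStronglyMeasurable f μ) : Integrable f μ := by
  obtain ⟨C, hC⟩ := (Set.finite_range fun ω => ‖f ω‖).bddAbove
  exact Integrable.mono' (integrable_const C) hf (ae_of_all _ fun ω => hC (Set.mem_range_self ω))

/-- The measure `Q_t(A) = E[(1/q_t^G) 1_A]` is a probability measure under which
`F_t` and `σ(G)` are independent, coinciding with `P` on `F_t` and on `σ(G)`:
`Q_t(B ∩ {G = c}) = P(B) · P(G = c)`. -/
theorem stmt2 {Ω : Type*} [Fintype Ω] {mΩ : MeasurableSpace Ω}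
    (μ : Measure Ω) [IsProbabilityMeasure μ]
    (T : ℕ) (hT : 1 ≤ T) (ℱ : Filtration ℕ mΩ)
    {Γ : Type*} [Fintype Γ] [MeasurableSpace Γ] [MeasurableSingletonClass Γ]
    (G : Ω → Γ) (hG : Measurable G)
    (hposG : ∀ c : Γ, 0 < (μ (G ⁻¹' {c})).toReal)
    (hpos : ∀ c : Γ, ∀ s ≤ T - 1, ∀ᵐ ω ∂μ,
      0 < (μ[(G ⁻¹' {c}).indicator (fun _ => (1 : ℝ)) | ℱ s]) ω)
    (qG : ℕ → Ω → ℝ)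
    (hqG : ∀ s ω, qG s ω =
      (μ[(G ⁻¹' {G ω}).indicator (fun _ => (1 : ℝ)) | ℱ s]) ω / (μ (G ⁻¹' {G ω})).toReal)
    (t : ℕ) (ht : t ≤ T - 1)
    (Qt : Set Ω → ℝ)
    (hQt : ∀ A, Qt A = ∫ ω in A, (qG t ω)⁻¹ ∂μ) :
    Qt Set.univ = 1 ∧ (∀ A, 0 ≤ Qt A) ∧
    ∀ B, MeasurableSet[ℱ t] B → ∀ c : Γ,
      Qt (B ∩ G ⁻¹' {c}) = (μ B).toReal * (μ (G ⁻¹' {c})).toReal := by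
  have hm : ℱ t ≤ mΩ := ℱ.le t
  set fc : Γ → Ω → ℝ := fun c => μ[(G ⁻¹' {c}).indicator (fun _ => (1 : ℝ)) | ℱ t] with hfc
  have hfcpos : ∀ᵐ ω ∂μ, ∀ c, 0 < fc c ω := ae_all_iff.2 fun c => hpos c t ht
  have hGc : ∀ c : Γ, MeasurableSet (G ⁻¹' {c}) := fun c => hG (measurableSet_singleton c)
  have hfc_meas : ∀ c, Measurable (fc c) := fun c =>
    (stronglyMeasurable_condExp.mono hm).measurable
  -- the inverse of qG, expressed on each fiber
  have hqinv : ∀ ω, (qG t ω)⁻¹ = (μ (G ⁻¹' {G ω})).toReal * (fc (G ω) ω)⁻¹ := by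
    intro ω
    rw [hqG, inv_div, div_eq_mul_inv]
  -- key computation
  have key : ∀ B, MeasurableSet[ℱ t] B → ∀ c : Γ,
      ∫ ω in B ∩ G ⁻¹' {c}, (μ (G ⁻¹' {c})).toReal * (fc c ω)⁻¹ ∂μ
        = (μ B).toReal * (μ (G ⁻¹' {c})).toReal := by
    intro B hB c
    have hBm : MeasurableSet B := hm _ hB
    have hprod_int :
        Integrable (fun ω => (fc c ω)⁻¹ * (G ⁻¹' {c}).indicator (fun _ => (1 : ℝ)) ω) μ :=
      integrable_fin
        (((hfc_meas c).inv.mul (measurable_const.indicator (hGc c))).aestronglyMeasurable)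
    have hind_int : Integrable ((G ⁻¹' {c}).indicator (fun _ => (1 : ℝ))) μ :=
      integrable_fin ((measurable_const.indicator (hGc c)).aestronglyMeasurable)
    have e1 : ∫ ω in B ∩ G ⁻¹' {c}, (fc c ω)⁻¹ ∂μ
        = ∫ ω in B, (fc c ω)⁻¹ * (G ⁻¹' {c}).indicator (fun _ => (1 : ℝ)) ω ∂μ := by
      rw [← setIntegral_indicator (hGc c)]
      refine integral_congr_ae (ae_of_all _ fun ω => ?_)
      by_cases h : ω ∈ G ⁻¹' {c} <;> simp [h]
    have e2 : (fun ω => (fc c ω)⁻¹ * (G ⁻¹' {c}).indicator (fun _ => (1 : ℝ)) ω)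
        = (fun ω => (fc c)⁻¹ ω * ((G ⁻¹' {c}).indicator (fun _ => (1 : ℝ))) ω) := rfl
    have hmul : μ[(fun ω => (fc c ω)⁻¹ * (G ⁻¹' {c}).indicator (fun _ => (1 : ℝ)) ω) | ℱ t]
        =ᵐ[μ] fun _ => (1 : ℝ) := by
      have h1 := condExp_mul_of_stronglyMeasurable_left (m := ℱ t) (μ := μ)
        ((stronglyMeasurable_condExp
          (f := (G ⁻¹' {c}).indicator fun _ => (1 : ℝ))).measurable.inv).stronglyMeasurable
        hprod_int hind_int
      refine h1.trans ?_
      filter_upwards [hfcpos] with ω hω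
      have : fc c ω ≠ 0 := (hω c).ne'
      simp only [Pi.mul_apply, Pi.inv_apply, ← hfc]
      exact inv_mul_cancel₀ this
    calc ∫ ω in B ∩ G ⁻¹' {c}, (μ (G ⁻¹' {c})).toReal * (fc c ω)⁻¹ ∂μ
        = (μ (G ⁻¹' {c})).toReal * ∫ ω in B ∩ G ⁻¹' {c}, (fc c ω)⁻¹ ∂μ := by
          rw [integral_const_mul]
      _ = (μ (G ⁻¹' {c})).toReal *
            ∫ ω in B, (fc c ω)⁻¹ * (G ⁻¹' {c}).indicator (fun _ => (1 : ℝ)) ω ∂μ := by rw [e1]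
      _ = (μ (G ⁻¹' {c})).toReal *
            ∫ ω in B, (μ[(fun ω => (fc c ω)⁻¹ * (G ⁻¹' {c}).indicator (fun _ => (1 : ℝ)) ω)
              | ℱ t]) ω ∂μ := by
          rw [setIntegral_condExp hm hprod_int hB]
      _ = (μ (G ⁻¹' {c})).toReal * ∫ _ω in B, (1 : ℝ) ∂μ := by
          rw [integral_congr_ae (ae_restrict_of_ae hmul)]
      _ = (μ (G ⁻¹' {c})).toReal * (μ B).toReal := by
          rw [setIntegral_const, smul_eq_mul, mul_one, measureReal_def]
      _ = (μ B).toReal * (μ (G ⁻¹' {c})).toReal := mul_comm _ _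
  -- the main identity
  have main : ∀ B, MeasurableSet[ℱ t] B → ∀ c : Γ,
      Qt (B ∩ G ⁻¹' {c}) = (μ B).toReal * (μ (G ⁻¹' {c})).toReal := by
    intro B hB c
    rw [hQt]
    have hBm : MeasurableSet (B ∩ G ⁻¹' {c}) := (hm _ hB).inter (hGc c)
    have hcong : ∫ ω in B ∩ G ⁻¹' {c}, (qG t ω)⁻¹ ∂μ
        = ∫ ω in B ∩ G ⁻¹' {c}, (μ (G ⁻¹' {c})).toReal * (fc c ω)⁻¹ ∂μ := by
      refine setIntegral_congr_fun hBm fun ω hω => ?_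
      have hc : G ω = c := hω.2
      rw [hqinv, hc]
    rw [hcong, key B hB c]
  refine ⟨?_, ?_, main⟩
  · -- Qt univ = 1
    rw [hQt, Measure.restrict_univ]
    have hdecomp : (fun ω => (qG t ω)⁻¹)
        = fun ω => ∑ c : Γ, (G ⁻¹' {c}).indicator
            (fun ω' => (μ (G ⁻¹' {c})).toReal * (fc c ω')⁻¹) ω := by
      funext ω
      rw [Finset.sum_eq_single (G ω)]
      · rw [Set.indicator_of_mem (by simp : ω ∈ G ⁻¹' {G ω}), hqinv]
      · intro c _ hc
        exact Set.indicator_of_notMem (by simpa using (Ne.symm hc)) _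
      · simp
    have hint : ∀ c : Γ, Integrable ((G ⁻¹' {c}).indicator
        (fun ω' => (μ (G ⁻¹' {c})).toReal * (fc c ω')⁻¹)) μ := fun c =>
      integrable_fin ((((hfc_meas c).inv.const_mul _).indicator (hGc c)).aestronglyMeasurable)
    rw [hdecomp, integral_finset_sum _ fun c _ => hint c]
    have heach : ∀ c : Γ, ∫ ω, (G ⁻¹' {c}).indicator
        (fun ω' => (μ (G ⁻¹' {c})).toReal * (fc c ω')⁻¹) ω ∂μ = (μ (G ⁻¹' {c})).toReal := by
      intro c
      rw [integral_indicator (hGc c)]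
      have := key Set.univ MeasurableSet.univ c
      rw [Set.univ_inter] at this
      rw [this]
      simp
    rw [Finset.sum_congr rfl fun c _ => heach c]
    have hsum : ∑ c : Γ, μ (G ⁻¹' {c}) = 1 := by
      rw [sum_measure_preimage_singleton _ fun c _ => hGc c]
      simp
    have : ∑ c : Γ, (μ (G ⁻¹' {c})).toReal = (∑ c : Γ, μ (G ⁻¹' {c})).toReal :=
      (ENNReal.toReal_sum fun c _ => measure_ne_top μ _).symm
    rw [this, hsum, ENNReal.toReal_one]
  · -- nonnegativity
    intro A
    rw [hQt]
    refine integral_nonneg_of_ae (ae_restrict_of_ae ?_)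
    filter_upwards [hfcpos] with ω hω
    have : 0 < qG t ω := by
      rw [hqG]
      exact div_pos (hω (G ω)) (hposG (G ω))
    positivity
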